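/- Let P be a translation invariant probability measure on (T, B(T)) such that the tail σ-algebra B_{−∞}(T) is P-trivial. Then the action of translations is mixing: for all D, E ∈ B(T), P(D ∩ (E + h)) → P(D)·P(E) as |h| → ∞. -/

import Mathlib

open MeasureTheory Set

noncomputable section

/-- Euclidean space `ℝ^ℓ`. -/
abbrev V (ℓ : ℕ) := EuclideanSpace ℝ (Fin ℓ)

/-- The space of tessellations, identified with their boundaries: closed subsets of `ℝ^ℓ`. -/
def Tess (ℓ : ℕ) : Type := {F : Set (V ℓ) // IsClosed F}

/-- For `A ⊆ ℝ^ℓ`, the σ-algebra `B(T_A)` on the space of tessellations, generated by the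
sets `{F : F ∩ C = ∅}` with `C` compact and `C ⊆ A`. -/
def tessSigma (ℓ : ℕ) (A : Set (V ℓ)) : MeasurableSpace (Tess ℓ) :=
  MeasurableSpace.generateFrom
    {s : Set (Tess ℓ) | ∃ C : Set (V ℓ), IsCompact C ∧ C ⊆ A ∧ s = {F : Tess ℓ | F.1 ∩ C = ∅}}

/-- The σ-algebra `B(T)` (obtained for `A = univ`), as the ambient measurable structure. -/
instance (ℓ : ℕ) : MeasurableSpace (Tess ℓ) := tessSigma ℓ Set.univ

/-- A window: a compact convex polytope with nonempty interior. -/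
def IsWindow (ℓ : ℕ) (W : Set (V ℓ)) : Prop :=
  (∃ S : Finset (V ℓ), W = convexHull ℝ (S : Set (V ℓ))) ∧ (interior W).Nonempty

/-- The cube `[-n, n]^ℓ`. -/
def cube (ℓ n : ℕ) : Set (V ℓ) := {x | ∀ i, |x i| ≤ (n : ℝ)}

/-- The tail σ-algebra `B_{-∞}(T) = ⋂_{n ≥ 1} B(T_{W_n^c})` with `W_n = [-n,n]^ℓ`. -/
def tailSigma (ℓ : ℕ) : MeasurableSpace (Tess ℓ) :=
  ⨅ n : ℕ, tessSigma ℓ (cube ℓ (n + 1))ᶜ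

/-- Translation of a tessellation: `F + h = {x + h : x ∈ F}`. -/
def tessTranslate (ℓ : ℕ) (h : V ℓ) (F : Tess ℓ) : Tess ℓ :=
  ⟨(· + h) '' F.1, by simpa using (Homeomorph.addRight h).isClosedMap F.1 F.2⟩

section Aux

variable {ℓ : ℕ}

lemma tessSigma_mono {A B : Set (V ℓ)} (hAB : A ⊆ B) : tessSigma ℓ A ≤ tessSigma ℓ B := by
  apply MeasurableSpace.generateFrom_mono
  rintro s ⟨C, hC, hCA, rfl⟩
  exact ⟨C, hC, hCA.trans hAB, rfl⟩

lemma tessSigma_le_ambient (A : Set (V ℓ)) :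
    tessSigma ℓ A ≤ (inferInstance : MeasurableSpace (Tess ℓ)) :=
  tessSigma_mono (subset_univ A)

lemma cube_mono {m k : ℕ} (h : m ≤ k) : cube ℓ m ⊆ cube ℓ k := by
  intro x hx i
  exact (hx i).trans (Nat.cast_le.mpr h)

lemma tessTranslate_translate (g h : V ℓ) (F : Tess ℓ) :
    tessTranslate ℓ g (tessTranslate ℓ h F) = tessTranslate ℓ (h + g) F := by
  apply Subtype.ext
  simp only [tessTranslate, Set.image_image, add_assoc]

lemma tessTranslate_zero (F : Tess ℓ) : tessTranslate ℓ 0 F = F := by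
  apply Subtype.ext
  simp [tessTranslate]

lemma tessTranslate_leftInverse (h : V ℓ) :
    Function.LeftInverse (tessTranslate ℓ (-h)) (tessTranslate ℓ h) := fun F => by
  rw [tessTranslate_translate, add_neg_cancel, tessTranslate_zero]

lemma image_tessTranslate_eq_preimage (h : V ℓ) (s : Set (Tess ℓ)) :
    tessTranslate ℓ h '' s = tessTranslate ℓ (-h) ⁻¹' s := by
  ext F
  constructor
  · rintro ⟨G, hG, rfl⟩
    simpa [tessTranslate_leftInverse h G] using hG
  · intro hF
    refine ⟨tessTranslate ℓ (-h) F, hF, ?_⟩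
    have := tessTranslate_leftInverse (-h) F
    rwa [neg_neg] at this

lemma measurable_tessTranslate (g : V ℓ) (A : Set (V ℓ)) :
    @Measurable _ _ (tessSigma ℓ ((· + (-g)) '' A)) (tessSigma ℓ A) (tessTranslate ℓ g) := by
  refine @measurable_generateFrom _ _ (tessSigma ℓ ((· + (-g)) '' A)) _ _ ?_
  rintro s ⟨C, hC, hCA, rfl⟩
  have hset : tessTranslate ℓ g ⁻¹' {F : Tess ℓ | F.1 ∩ C = ∅} =
      {F : Tess ℓ | F.1 ∩ ((· + (-g)) '' C) = ∅} := by
    ext F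
    simp only [mem_preimage, mem_setOf_eq, tessTranslate, eq_empty_iff_forall_notMem]
    constructor
    · rintro H x ⟨hxF, y, hyC, rfl⟩
      exact H (y + -g + g) ⟨⟨_, hxF, rfl⟩, by simpa using hyC⟩
    · rintro H x ⟨⟨y, hyF, rfl⟩, hxC⟩
      exact H y ⟨hyF, ⟨y + g, hxC, by module⟩⟩
  rw [hset]
  exact MeasurableSpace.measurableSet_generateFrom
    ⟨(· + (-g)) '' C, hC.image (continuous_add_right _), image_mono hCA, rfl⟩

lemma measurableSet_image_translate {A : Set (V ℓ)} {s : Set (Tess ℓ)}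
    (hs : MeasurableSet[tessSigma ℓ A] s) (h : V ℓ) :
    MeasurableSet[tessSigma ℓ ((· + h) '' A)] (tessTranslate ℓ h '' s) := by
  rw [image_tessTranslate_eq_preimage]
  have : ((· + h) '' A) = ((· + (-(-h))) '' A) := by simp
  rw [this]
  exact measurable_tessTranslate (-h) A hs


lemma abs_coord_le_norm (x : V ℓ) (i : Fin ℓ) : |x i| ≤ ‖x‖ := by
  rw [EuclideanSpace.norm_eq]
  rw [← Real.sqrt_sq (abs_nonneg (x i))]
  apply Real.sqrt_le_sqrt
  rw [sq_abs]
  have : x i ^ 2 = ‖x i‖ ^ 2 := by rw [Real.norm_eq_abs, sq_abs]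
  rw [this]
  exact Finset.single_le_sum (f := fun j => ‖x j‖ ^ 2) (fun j _ => sq_nonneg _) (Finset.mem_univ i)

lemma exists_cube_subset {C : Set (V ℓ)} (hC : IsCompact C) : ∃ m : ℕ, C ⊆ cube ℓ m := by
  obtain ⟨r, hr⟩ := isBounded_iff_forall_norm_le.1 hC.isBounded
  refine ⟨⌈r⌉₊, fun x hx i => ?_⟩
  exact (abs_coord_le_norm x i).trans ((hr x hx).trans (Nat.le_ceil r))

lemma norm_le_sqrt_card {c : ℝ} (hc : 0 ≤ c) (h : V ℓ) (hcoord : ∀ i, |h i| ≤ c) :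
    ‖h‖ ≤ Real.sqrt ℓ * c := by
  rw [EuclideanSpace.norm_eq]
  have : ∑ i, ‖h i‖ ^ 2 ≤ (ℓ : ℝ) * c ^ 2 := by
    calc ∑ i, ‖h i‖ ^ 2 ≤ ∑ _i : Fin ℓ, c ^ 2 := by
          apply Finset.sum_le_sum
          intro i _
          rw [Real.norm_eq_abs]
          exact pow_le_pow_left₀ (abs_nonneg _) (hcoord i) 2
      _ = (ℓ : ℝ) * c ^ 2 := by simp [Finset.sum_const, mul_comm]
  calc Real.sqrt (∑ i, ‖h i‖ ^ 2) ≤ Real.sqrt ((ℓ : ℝ) * c ^ 2) := Real.sqrt_le_sqrt this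
    _ = Real.sqrt ℓ * c := by
        rw [Real.sqrt_mul (Nat.cast_nonneg ℓ), Real.sqrt_sq hc]

lemma geom_translate (m n : ℕ) (h : V ℓ)
    (hh : Real.sqrt ℓ * ((m : ℝ) + n + 2) + 1 ≤ ‖h‖) :
    (· + h) '' cube ℓ m ⊆ (cube ℓ (n + 1))ᶜ := by
  have hex : ∃ i : Fin ℓ, ((m : ℝ) + n + 2) ≤ |h i| := by
    by_contra hcon
    push_neg at hcon
    have := norm_le_sqrt_card (by positivity) h (fun i => (hcon i).le)
    linarith
  obtain ⟨i, hi⟩ := hex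
  rintro x ⟨z, hz, rfl⟩ hmem
  have h1 : |z i + h i| ≤ (n : ℝ) + 1 := by
    have := hmem i
    simpa [PiLp.add_apply] using this
  have h2 : |z i| ≤ (m : ℝ) := hz i
  have : |h i| ≤ |z i + h i| + |z i| := by
    have := abs_add_le (z i + h i) (-(z i))
    simpa using this
  linarith

/-- The algebra of sets measurable with respect to some window `[-m,m]^ℓ`. -/
def winAlg (ℓ : ℕ) : Set (Set (Tess ℓ)) :=
  {s | ∃ m : ℕ, MeasurableSet[tessSigma ℓ (cube ℓ m)] s}

lemma isSetAlgebra_winAlg : MeasureTheory.IsSetAlgebra (winAlg ℓ) where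
  empty_mem := ⟨0, @MeasurableSet.empty _ (tessSigma ℓ (cube ℓ 0))⟩
  compl_mem := by rintro s ⟨m, hs⟩; exact ⟨m, hs.compl⟩
  union_mem := by
    rintro s t ⟨m, hs⟩ ⟨k, ht⟩
    exact ⟨max m k, (tessSigma_mono (cube_mono (le_max_left m k)) _ hs).union
      (tessSigma_mono (cube_mono (le_max_right m k)) _ ht)⟩

lemma ambient_eq_generateFrom :
    (inferInstance : MeasurableSpace (Tess ℓ)) = MeasurableSpace.generateFrom (winAlg ℓ) := by
  apply le_antisymm
  · apply MeasurableSpace.generateFrom_le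
    rintro s ⟨C, hC, -, rfl⟩
    obtain ⟨m, hm⟩ := exists_cube_subset hC
    exact MeasurableSpace.measurableSet_generateFrom
      ⟨m, MeasurableSpace.measurableSet_generateFrom ⟨C, hC, hm, rfl⟩⟩
  · apply MeasurableSpace.generateFrom_le
    rintro s ⟨m, hs⟩
    exact tessSigma_le_ambient _ _ hs

/-- The σ-algebra of events outside the window `[-(n+1), n+1]^ℓ`. -/
def Gsig (ℓ : ℕ) (n : ℕ) : MeasurableSpace (Tess ℓ) := tessSigma ℓ (cube ℓ (n + 1))ᶜ

lemma Gsig_le (n : ℕ) : Gsig ℓ n ≤ (inferInstance : MeasurableSpace (Tess ℓ)) :=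
  tessSigma_le_ambient _

lemma Gsig_antitone {m n : ℕ} (h : m ≤ n) : Gsig ℓ n ≤ Gsig ℓ m :=
  tessSigma_mono (compl_subset_compl.2 (cube_mono (by omega)))

instance instFactGsig (n : ℕ) :
    Fact (Gsig ℓ n ≤ (inferInstance : MeasurableSpace (Tess ℓ))) := ⟨Gsig_le n⟩

/-- The subspace of `L²(P)` of functions measurable w.r.t. `Gsig ℓ n`. -/
def Ksub (ℓ : ℕ) (P : Measure (Tess ℓ)) (n : ℕ) : Submodule ℝ (Lp ℝ 2 P) :=
  lpMeas ℝ ℝ (Gsig ℓ n) 2 P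

instance instCompleteKsub (P : Measure (Tess ℓ)) (n : ℕ) : CompleteSpace (Ksub ℓ P n) := by
  unfold Ksub; infer_instance

lemma Ksub_antitone (P : Measure (Tess ℓ)) {m n : ℕ} (h : m ≤ n) :
    Ksub ℓ P n ≤ Ksub ℓ P m := by
  intro f hf
  exact mem_lpMeas_iff_aestronglyMeasurable.2
    ((mem_lpMeas_iff_aestronglyMeasurable.1 hf).mono (Gsig_antitone h))

lemma integral_abs_le_norm (P : Measure (Tess ℓ)) [IsProbabilityMeasure P] (f : Lp ℝ 2 P) :
    ∫ x, |f x| ∂P ≤ ‖f‖ := by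
  have hint : Integrable f P :=
    memLp_one_iff_integrable.1 ((Lp.memLp f).mono_exponent one_le_two)
  have h1 : ∫ x, |f x| ∂P = (eLpNorm (⇑f) 1 P).toReal := by
    rw [eLpNorm_one_eq_lintegral_enorm]
    simpa [Real.norm_eq_abs] using integral_norm_eq_lintegral_enorm hint.1
  rw [h1, Lp.norm_def]
  exact ENNReal.toReal_mono (Lp.eLpNorm_ne_top f)
    (eLpNorm_le_eLpNorm_of_exponent_le one_le_two (Lp.aestronglyMeasurable f))

/-- Backward martingale convergence via Hilbert space projections, plus tail triviality:
the conditional expectations of `1_D` given `Gsig ℓ n` converge in `L¹` to the constant `P D`. -/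
lemma key_approx (P : Measure (Tess ℓ)) [IsProbabilityMeasure P]
    (htail : ∀ D : Set (Tess ℓ), MeasurableSet[tailSigma ℓ] D → P D = 0 ∨ P D = 1)
    {D : Set (Tess ℓ)} (hD : MeasurableSet D) {ε : ℝ} (hε : 0 < ε) :
    ∃ n : ℕ, ∀ A : Set (Tess ℓ), MeasurableSet[Gsig ℓ n] A →
      |(P (D ∩ A)).toReal - (P D).toReal * (P A).toReal| ≤ ε := by
  classical
  set gL : Lp ℝ 2 P := indicatorConstLp 2 hD (measure_ne_top P D) (1 : ℝ) with hgL
  set Y : ℕ → Lp ℝ 2 P :=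
    fun n => ((condExpL2 ℝ ℝ (Gsig_le (ℓ := ℓ) n) gL : lpMeas ℝ ℝ (Gsig ℓ n) 2 P) : Lp ℝ 2 P)
    with hY
  have hcond : ∀ n, condExpL2 ℝ ℝ (Gsig_le (ℓ := ℓ) n) gL
      = Submodule.orthogonalProjectionOnto (Ksub ℓ P n) gL := fun n => rfl
  have hYmem : ∀ m n, m ≤ n → Y n ∈ Ksub ℓ P m := fun m n hmn =>
    Ksub_antitone P hmn (SetLike.coe_mem _)
  have hYproj : ∀ m n, m ≤ n →
      (Submodule.orthogonalProjectionOnto (Ksub ℓ P n) (Y m) : Lp ℝ 2 P) = Y n := by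
    intro m n hmn
    rw [hY]
    simp only [hcond]
    rw [← Submodule.starProjection_apply (Ksub ℓ P m), Submodule.orthogonalProjectionOnto_starProjection_of_le (Ksub_antitone P hmn)]
  -- Pythagoras
  have hpyth : ∀ m n, m ≤ n → ‖Y m‖ ^ 2 = ‖Y n‖ ^ 2 + ‖Y m - Y n‖ ^ 2 := by
    intro m n hmn
    have horth : Y m - Y n ∈ (Ksub ℓ P n)ᗮ := by
      have := Submodule.sub_starProjection_mem_orthogonal (K := Ksub ℓ P n) (Y m)
      rwa [Submodule.starProjection_apply, hYproj m n hmn] at this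
    have hinner : inner ℝ (Y n) (Y m - Y n) = (0 : ℝ) :=
      (Submodule.mem_orthogonal (Ksub ℓ P n) _).1 horth _ (hYmem n n le_rfl)
    calc ‖Y m‖ ^ 2 = ‖Y n + (Y m - Y n)‖ ^ 2 := by ring_nf; rw [add_sub_cancel]
      _ = ‖Y n‖ ^ 2 + 2 * inner ℝ (Y n) (Y m - Y n) + ‖Y m - Y n‖ ^ 2 := norm_add_sq_real _ _
      _ = ‖Y n‖ ^ 2 + ‖Y m - Y n‖ ^ 2 := by rw [hinner]; ring
  set b : ℕ → ℝ := fun n => ‖Y n‖ ^ 2 with hb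
  have hbanti : ∀ m n, m ≤ n → b n ≤ b m := by
    intro m n hmn
    have h : b m = b n + ‖Y m - Y n‖ ^ 2 := hpyth m n hmn
    nlinarith [sq_nonneg ‖Y m - Y n‖]
  have hbdd : BddBelow (Set.range b) := ⟨0, by rintro x ⟨n, rfl⟩; positivity⟩
  -- Cauchy sequence
  have hcauchy : CauchySeq Y := by
    rw [Metric.cauchySeq_iff']
    intro δ hδ
    have hlt : ⨅ n, b n < (⨅ n, b n) + δ ^ 2 := by nlinarith
    obtain ⟨N, hN⟩ := exists_lt_of_ciInf_lt hlt
    refine ⟨N, fun n hn => ?_⟩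
    have h1 : b N = b n + ‖Y N - Y n‖ ^ 2 := hpyth N n hn
    have h2 : (⨅ k, b k) ≤ b n := ciInf_le hbdd n
    have h3 : ‖Y N - Y n‖ ^ 2 < δ ^ 2 := by nlinarith
    have h4 : ‖Y N - Y n‖ < δ := lt_of_pow_lt_pow_left₀ 2 hδ.le h3
    rw [dist_eq_norm, norm_sub_rev]
    exact h4
  obtain ⟨Yinf, hYinf⟩ := cauchySeq_tendsto_of_complete hcauchy
  -- the limit is a.e. measurable w.r.t. every Gsig m
  have hYinf_meas : ∀ m : ℕ, AEStronglyMeasurable[Gsig ℓ m] (⇑Yinf) P := by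
    intro m
    have hclosed : IsClosed {f : Lp ℝ 2 P | AEStronglyMeasurable[Gsig ℓ m] f P} :=
      isClosed_aestronglyMeasurable (Gsig_le m)
    have hev : ∀ᶠ n in Filter.atTop, Y n ∈ {f : Lp ℝ 2 P | AEStronglyMeasurable[Gsig ℓ m] f P} := by
      filter_upwards [Filter.eventually_ge_atTop m] with n hn
      exact mem_lpMeas_iff_aestronglyMeasurable.1 (hYmem m n hn)
    exact hclosed.mem_of_tendsto hYinf hev
  choose Z hZmeas hZae using hYinf_meas
  set W : Tess ℓ → ℝ := Z 0 with hW
  have hWmeas : Measurable[Gsig ℓ 0] W := (hZmeas 0).measurable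
  have hWamb : Measurable W := hWmeas.mono (Gsig_le 0) le_rfl
  have hWae : ⇑Yinf =ᵐ[P] W := hZae 0
  -- zero-one law for the level sets of W
  have hW01 : ∀ t : ℝ, P {x | W x ≤ t} = 0 ∨ P {x | W x ≤ t} = 1 := by
    intro t
    set S : ℕ → Set (Tess ℓ) := fun j => Z j ⁻¹' Set.Iic t with hS
    have hSmeas : ∀ j, MeasurableSet[Gsig ℓ j] (S j) :=
      fun j => (hZmeas j).measurable measurableSet_Iic
    set U : ℕ → Set (Tess ℓ) := fun k => ⋃ m, S (k + m) with hU
    have hUmeas : ∀ k, MeasurableSet[Gsig ℓ k] (U k) := by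
      intro k
      exact @MeasurableSet.iUnion _ _ (Gsig ℓ k) _ _
        (fun m => Gsig_antitone (Nat.le_add_right k m) _ (hSmeas (k + m)))
    have hUanti : ∀ j k, j ≤ k → U k ⊆ U j := by
      intro j k hjk x hx
      rw [hU, Set.mem_iUnion] at hx ⊢
      obtain ⟨m, hm⟩ := hx
      exact ⟨(k - j) + m, by rwa [show j + ((k - j) + m) = k + m by omega]⟩
    set L : Set (Tess ℓ) := ⋂ k, U k with hL
    have hLmeas : MeasurableSet[tailSigma ℓ] L := by
      rw [tailSigma, MeasurableSpace.measurableSet_iInf]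
      intro k
      have hLeq : L = ⋂ k', U (k + k') := by
        apply Set.Subset.antisymm
        · exact fun x hx => Set.mem_iInter.2 fun k' => Set.mem_iInter.1 hx (k + k')
        · intro x hx
          apply Set.mem_iInter.2
          intro j
          exact hUanti j (k + j) (by omega) (Set.mem_iInter.1 hx j)
      rw [hLeq]
      exact @MeasurableSet.iInter _ _ (Gsig ℓ k) _ _
        (fun k' => Gsig_antitone (by omega) _ (hUmeas (k + k')))
    have hPL := htail L hLmeas
    have haeZ : ∀ᵐ x ∂P, ∀ j, Z j x = Z 0 x := by
      rw [MeasureTheory.ae_all_iff]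
      intro j
      filter_upwards [hZae j, hZae 0] with x h1 h2
      rw [← h1, h2]
    have haeset : P {x | W x ≤ t} = P L := by
      apply measure_congr
      rw [Filter.eventuallyEq_set]
      filter_upwards [haeZ] with x hx
      simp only [Set.mem_setOf_eq, hL, hU, hS, Set.mem_iInter, Set.mem_iUnion, Set.mem_preimage,
        Set.mem_Iic, hx]
      constructor
      · intro h k; exact ⟨0, h⟩
      · intro h; obtain ⟨m, hm⟩ := h 0; exact hm
    rw [haeset]
    exact hPL
  -- W is a.e. constant
  have hWsets : ∀ t : ℝ, MeasurableSet {x | W x ≤ t} := fun t => hWamb measurableSet_Iic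
  set T : Set ℝ := {t | P {x | W x ≤ t} = 1} with hT
  have hTne : T.Nonempty := by
    by_contra hcon
    rw [Set.not_nonempty_iff_eq_empty] at hcon
    have hall : ∀ n : ℕ, P {x | W x ≤ (n : ℝ)} = 0 := by
      intro n
      rcases hW01 (n : ℝ) with h | h
      · exact h
      · exfalso
        have hmem : (n : ℝ) ∈ T := h
        rw [hcon] at hmem
        exact hmem
    have huniv : (Set.univ : Set (Tess ℓ)) ⊆ ⋃ n : ℕ, {x | W x ≤ (n : ℝ)} := by
      intro x _
      obtain ⟨n, hn⟩ := exists_nat_ge (W x)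
      exact Set.mem_iUnion.2 ⟨n, hn⟩
    have h0 := measure_mono_null huniv (measure_iUnion_null hall)
    simp [measure_univ] at h0
  have hTbdd : BddBelow T := by
    have hex : ∃ n : ℕ, P {x | W x ≤ -(n : ℝ)} = 0 := by
      by_contra hcon
      push_neg at hcon
      have hall1 : ∀ n : ℕ, P {x | W x ≤ -(n : ℝ)} = 1 :=
        fun n => (hW01 _).resolve_left (hcon n)
      have hz : ∀ n : ℕ, P ({x | W x ≤ -(n : ℝ)}ᶜ) = 0 := by
        intro n
        rw [measure_compl (hWsets _) (measure_ne_top P _), hall1 n, measure_univ, tsub_self]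
      have huniv : (Set.univ : Set (Tess ℓ)) ⊆ ⋃ n : ℕ, {x | W x ≤ -(n : ℝ)}ᶜ := by
        intro x _
        obtain ⟨n, hn⟩ := exists_nat_gt (-(W x))
        refine Set.mem_iUnion.2 ⟨n, fun hc => ?_⟩
        simp only [Set.mem_setOf_eq] at hc
        linarith
      have h0 := measure_mono_null huniv (measure_iUnion_null hz)
      simp [measure_univ] at h0
    obtain ⟨n, hn⟩ := hex
    refine ⟨-(n : ℝ), fun s hs => ?_⟩
    by_contra hlt
    push_neg at hlt
    have hmono : P {x | W x ≤ s} ≤ P {x | W x ≤ -(n : ℝ)} :=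
      measure_mono (fun x hx => le_trans hx hlt.le)
    rw [hs, hn] at hmono
    simp at hmono
  set c : ℝ := sInf T with hcdef
  have hc1 : ∀ t, c < t → P {x | W x ≤ t} = 1 := by
    intro t ht
    obtain ⟨s, hsT, hst⟩ := exists_lt_of_csInf_lt hTne ht
    have hmono : P {x | W x ≤ s} ≤ P {x | W x ≤ t} :=
      measure_mono (fun x hx => le_trans hx hst.le)
    rw [hsT] at hmono
    exact le_antisymm prob_le_one hmono
  have hc0 : ∀ t, t < c → P {x | W x ≤ t} = 0 := by
    intro t ht
    rcases hW01 t with h | h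
    · exact h
    · exact absurd (csInf_le hTbdd h) (not_le.2 ht)
  have hWc : W =ᵐ[P] fun _ => c := by
    have h1 : P {x | W x < c} = 0 := by
      have hsub : {x | W x < c} ⊆ ⋃ n : ℕ, {x | W x ≤ c - 1 / (n + 1)} := by
        intro x hx
        have hpos : (0 : ℝ) < c - W x := sub_pos.2 hx
        obtain ⟨n, hn⟩ := exists_nat_one_div_lt hpos
        refine Set.mem_iUnion.2 ⟨n, ?_⟩
        simp only [Set.mem_setOf_eq]
        have : (1 : ℝ) / (n + 1) < c - W x := hn
        linarith
      refine measure_mono_null hsub (measure_iUnion_null fun n => hc0 _ ?_)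
      have : (0 : ℝ) < 1 / ((n : ℝ) + 1) := by positivity
      linarith
    have h2 : P {x | c < W x} = 0 := by
      have hsub : {x | c < W x} ⊆ ⋃ n : ℕ, {x | W x ≤ c + 1 / (n + 1)}ᶜ := by
        intro x hx
        have hpos : (0 : ℝ) < W x - c := sub_pos.2 hx
        obtain ⟨n, hn⟩ := exists_nat_one_div_lt hpos
        refine Set.mem_iUnion.2 ⟨n, fun hc' => ?_⟩
        simp only [Set.mem_setOf_eq] at hc'
        have : (1 : ℝ) / (n + 1) < W x - c := hn
        linarith
      refine measure_mono_null hsub (measure_iUnion_null fun n => ?_)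
      rw [measure_compl (hWsets _) (measure_ne_top P _), hc1 _ ?_, measure_univ, tsub_self]
      have : (0 : ℝ) < 1 / ((n : ℝ) + 1) := by positivity
      linarith
    have hsub : {x | W x ≠ c} ⊆ {x | W x < c} ∪ {x | c < W x} := fun x hx => lt_or_gt_of_ne hx
    rw [Filter.EventuallyEq, ae_iff]
    exact measure_mono_null hsub (measure_union_null h1 h2)
  -- the integral of each Y n is P D
  have hYint : ∀ n, ∫ x, Y n x ∂P = (P D).toReal := by
    intro n
    have h1 := integral_condExpL2_eq (𝕜 := ℝ) (Gsig_le (ℓ := ℓ) n) gL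
      (@MeasurableSet.univ _ (Gsig ℓ n)) (measure_ne_top P _)
    rw [setIntegral_univ, setIntegral_univ] at h1
    rw [show (⇑(Y n) : Tess ℓ → ℝ) = ⇑((condExpL2 ℝ ℝ (Gsig_le (ℓ := ℓ) n) gL : lpMeas ℝ ℝ (Gsig ℓ n) 2 P) : Lp ℝ 2 P) from rfl]
    rw [h1, hgL, integral_indicatorConstLp]
    simp
    rfl
  have hLpint : ∀ f : Lp ℝ 2 P, Integrable (⇑f) P :=
    fun f => memLp_one_iff_integrable.1 ((Lp.memLp f).mono_exponent one_le_two)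
  have hnorm0 : Filter.Tendsto (fun n => ‖Y n - Yinf‖) Filter.atTop (nhds 0) := by
    have := tendsto_iff_norm_sub_tendsto_zero.1 hYinf
    simpa using this
  have hintYinf : ∫ x, Yinf x ∂P = c := by
    rw [integral_congr_ae (hWae.trans hWc)]
    simp [measure_univ]
  have hcPD : c = (P D).toReal := by
    have hdiff : ∀ n, |(P D).toReal - c| ≤ ‖Y n - Yinf‖ := by
      intro n
      have h2 : ∫ x, (Y n - Yinf) x ∂P = (P D).toReal - c := by
        rw [integral_congr_ae (Lp.coeFn_sub (Y n) Yinf)]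
        simp only [Pi.sub_apply]
        rw [integral_sub (hLpint (Y n)) (hLpint Yinf), hYint n, hintYinf]
      calc |(P D).toReal - c| = |∫ x, (Y n - Yinf) x ∂P| := by rw [h2]
        _ ≤ ∫ x, |(Y n - Yinf) x| ∂P := by
            simpa [Real.norm_eq_abs] using norm_integral_le_integral_norm (⇑(Y n - Yinf))
        _ ≤ ‖Y n - Yinf‖ := integral_abs_le_norm P _
    have hle : |(P D).toReal - c| ≤ 0 := ge_of_tendsto' hnorm0 hdiff
    have := abs_nonneg ((P D).toReal - c)
    have : (P D).toReal - c = 0 := by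
      rw [← abs_eq_zero]; linarith
    linarith
  -- choose n with small L² distance
  obtain ⟨n, hn⟩ : ∃ n, ‖Y n - Yinf‖ ≤ ε := by
    have := (hnorm0.eventually (gt_mem_nhds hε)).exists
    obtain ⟨n, hn⟩ := this
    exact ⟨n, hn.le⟩
  refine ⟨n, fun A hA => ?_⟩
  have hAamb : MeasurableSet A := Gsig_le n A hA
  have hsetY : ∫ x in A, Y n x ∂P = (P (D ∩ A)).toReal := by
    have h1 := integral_condExpL2_eq (𝕜 := ℝ) (Gsig_le (ℓ := ℓ) n) gL hA (measure_ne_top P A)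
    rw [show (⇑(Y n) : Tess ℓ → ℝ) = ⇑((condExpL2 ℝ ℝ (Gsig_le (ℓ := ℓ) n) gL : lpMeas ℝ ℝ (Gsig ℓ n) 2 P) : Lp ℝ 2 P) from rfl]
    rw [h1, hgL, setIntegral_indicatorConstLp hAamb hD (measure_ne_top P D) (1 : ℝ)]
    simp
    rfl
  have hsplit : ∫ x in A, (Y n x - (P D).toReal) ∂P
      = (P (D ∩ A)).toReal - (P D).toReal * (P A).toReal := by
    rw [integral_sub (hLpint (Y n)).integrableOn (integrableOn_const (measure_ne_top P A))]
    rw [hsetY, setIntegral_const]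
    rw [smul_eq_mul, measureReal_def]
    ring
  rw [← hsplit]
  have habs : |∫ x in A, (Y n x - (P D).toReal) ∂P| ≤ ∫ x in A, |Y n x - (P D).toReal| ∂P := by
    simpa [Real.norm_eq_abs] using
      norm_integral_le_integral_norm (μ := P.restrict A) (fun x => Y n x - (P D).toReal)
  have hint2 : Integrable (fun x => |Y n x - (P D).toReal|) P :=
    ((hLpint (Y n)).sub (integrable_const _)).abs
  have hset_le : ∫ x in A, |Y n x - (P D).toReal| ∂P ≤ ∫ x, |Y n x - (P D).toReal| ∂P :=
    setIntegral_le_integral hint2 (Filter.Eventually.of_forall fun x => abs_nonneg _)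
  have hcongr : ∫ x, |Y n x - (P D).toReal| ∂P = ∫ x, |(Y n - Yinf) x| ∂P := by
    apply integral_congr_ae
    filter_upwards [hWae, hWc, Lp.coeFn_sub (Y n) Yinf] with x h1 h2 h3
    rw [h3]
    simp only [Pi.sub_apply]
    rw [h1, h2, hcPD]
  calc |∫ x in A, (Y n x - (P D).toReal) ∂P|
      ≤ ∫ x in A, |Y n x - (P D).toReal| ∂P := habs
    _ ≤ ∫ x, |Y n x - (P D).toReal| ∂P := hset_le
    _ = ∫ x, |(Y n - Yinf) x| ∂P := hcongr
    _ ≤ ‖Y n - Yinf‖ := integral_abs_le_norm P _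
    _ ≤ ε := hn

open symmDiff

lemma abs_toReal_sub_le {α : Type*} {mα : MeasurableSpace α} {μ : Measure α} [IsFiniteMeasure μ]
    {s t u : Set α} (h1 : μ s ≤ μ t + μ u) (h2 : μ t ≤ μ s + μ u) :
    |(μ s).toReal - (μ t).toReal| ≤ (μ u).toReal := by
  have ht := measure_ne_top μ t
  have hs := measure_ne_top μ s
  have hu := measure_ne_top μ u
  rw [abs_sub_le_iff]
  constructor
  · have hh := ENNReal.toReal_mono (by finiteness) h1
    rw [ENNReal.toReal_add ht hu] at hh
    linarith
  · have hh := ENNReal.toReal_mono (by finiteness) h2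
    rw [ENNReal.toReal_add hs hu] at hh
    linarith

theorem trivial_tail_implies_mixing' (ℓ : ℕ) (P : Measure (Tess ℓ)) [IsProbabilityMeasure P]
    (hTI : ∀ E : Set (Tess ℓ), MeasurableSet E → ∀ h : V ℓ,
      P (tessTranslate ℓ h '' E) = P E)
    (htail : ∀ D : Set (Tess ℓ), MeasurableSet[tailSigma ℓ] D → P D = 0 ∨ P D = 1)
    (D E : Set (Tess ℓ)) (hD : MeasurableSet D) (hE : MeasurableSet E) :
    ∀ ε : ℝ, 0 < ε → ∃ R : ℝ, ∀ h : V ℓ, R ≤ ‖h‖ →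
      |(P (D ∩ tessTranslate ℓ h '' E)).toReal - (P D).toReal * (P E).toReal| < ε := by
  intro ε hε
  -- approximate E by a set measurable with respect to a window
  have hdense := Measure.MeasureDense.of_generateFrom_isSetAlgebra_finite (μ := P)
    isSetAlgebra_winAlg ambient_eq_generateFrom
  obtain ⟨E', hE'mem, hE'⟩ := hdense.approx E hE (measure_ne_top P E) (ε / 8) (by linarith)
  obtain ⟨m, hE'meas⟩ := hE'mem
  have hE'amb : MeasurableSet E' := tessSigma_le_ambient _ _ hE'meas
  -- apply the key approximation lemma
  obtain ⟨n, hkey⟩ := key_approx P htail hD (show (0 : ℝ) < ε / 2 by linarith)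
  refine ⟨Real.sqrt ℓ * ((m : ℝ) + n + 2) + 1, fun h hh => ?_⟩
  set A := tessTranslate ℓ h '' E' with hA
  have hAmem : MeasurableSet[Gsig ℓ n] A :=
    tessSigma_mono (geom_translate m n h hh) _ (measurableSet_image_translate hE'meas h)
  have hAamb : MeasurableSet A := Gsig_le n _ hAmem
  have hPA : P A = P E' := hTI E' hE'amb h
  -- the translated symmetric difference
  have hsymm_meas : MeasurableSet (E ∆ E') :=
    ((hE.diff hE'amb).union (hE'amb.diff hE))
  have hsymm : P (tessTranslate ℓ h '' (E ∆ E')) = P (E ∆ E') := hTI _ hsymm_meas h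
  have himg : tessTranslate ℓ h '' (E ∆ E') = (tessTranslate ℓ h '' E) ∆ A := by
    rw [hA, image_tessTranslate_eq_preimage, image_tessTranslate_eq_preimage,
      image_tessTranslate_eq_preimage]
    ext x
    simp [Set.mem_symmDiff]
  -- measure comparisons
  set B := tessTranslate ℓ h '' E with hB
  have hsub1 : D ∩ B ⊆ (D ∩ A) ∪ (B ∆ A) := by
    intro x hx
    by_cases hxA : x ∈ A
    · exact Or.inl ⟨hx.1, hxA⟩
    · exact Or.inr (Set.mem_symmDiff.2 (Or.inl ⟨hx.2, hxA⟩))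
  have hsub2 : D ∩ A ⊆ (D ∩ B) ∪ (B ∆ A) := by
    intro x hx
    by_cases hxB : x ∈ B
    · exact Or.inl ⟨hx.1, hxB⟩
    · exact Or.inr (Set.mem_symmDiff.2 (Or.inr ⟨hx.2, hxB⟩))
  have hm1 : P (D ∩ B) ≤ P (D ∩ A) + P (B ∆ A) :=
    (measure_mono hsub1).trans (measure_union_le _ _)
  have hm2 : P (D ∩ A) ≤ P (D ∩ B) + P (B ∆ A) :=
    (measure_mono hsub2).trans (measure_union_le _ _)
  have hBA : P (B ∆ A) = P (E ∆ E') := by rw [← himg, hsymm]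
  rw [hBA] at hm1 hm2
  have h1 : |(P (D ∩ B)).toReal - (P (D ∩ A)).toReal| ≤ (P (E ∆ E')).toReal :=
    abs_toReal_sub_le hm1 hm2
  -- comparing P E and P E'
  have hsub3 : E ⊆ E' ∪ (E ∆ E') := by
    intro x hx
    by_cases hx' : x ∈ E'
    · exact Or.inl hx'
    · exact Or.inr (Set.mem_symmDiff.2 (Or.inl ⟨hx, hx'⟩))
  have hsub4 : E' ⊆ E ∪ (E ∆ E') := by
    intro x hx
    by_cases hx' : x ∈ E
    · exact Or.inl hx'
    · exact Or.inr (Set.mem_symmDiff.2 (Or.inr ⟨hx, hx'⟩))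
  have h3 : |(P E).toReal - (P E').toReal| ≤ (P (E ∆ E')).toReal :=
    abs_toReal_sub_le ((measure_mono hsub3).trans (measure_union_le _ _))
      ((measure_mono hsub4).trans (measure_union_le _ _))
  -- the key estimate
  have h2 : |(P (D ∩ A)).toReal - (P D).toReal * (P E').toReal| ≤ ε / 2 := by
    have := hkey A hAmem
    rwa [hPA] at this
  -- numerics
  have hrR : (P (E ∆ E')).toReal < ε / 8 := ENNReal.toReal_lt_of_lt_ofReal hE'
  have hD1 : (P D).toReal ≤ 1 := by
    have := ENNReal.toReal_mono ENNReal.one_ne_top (prob_le_one (μ := P) (s := D))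
    simpa using this
  have hD0 : 0 ≤ (P D).toReal := ENNReal.toReal_nonneg
  have hfinal : |(P (D ∩ B)).toReal - (P D).toReal * (P E).toReal|
      ≤ |(P (D ∩ B)).toReal - (P (D ∩ A)).toReal|
        + |(P (D ∩ A)).toReal - (P D).toReal * (P E').toReal|
        + (P D).toReal * |(P E').toReal - (P E).toReal| := by
    have habs : |(P D).toReal * (P E').toReal - (P D).toReal * (P E).toReal|
        = (P D).toReal * |(P E').toReal - (P E).toReal| := by
      rw [← mul_sub, abs_mul, abs_of_nonneg hD0]
    calc |(P (D ∩ B)).toReal - (P D).toReal * (P E).toReal|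
        ≤ |(P (D ∩ B)).toReal - (P (D ∩ A)).toReal|
          + |(P (D ∩ A)).toReal - (P D).toReal * (P E).toReal| := abs_sub_le _ _ _
      _ ≤ |(P (D ∩ B)).toReal - (P (D ∩ A)).toReal|
          + (|(P (D ∩ A)).toReal - (P D).toReal * (P E').toReal|
            + |(P D).toReal * (P E').toReal - (P D).toReal * (P E).toReal|) := by
          have := abs_sub_le ((P (D ∩ A)).toReal) ((P D).toReal * (P E').toReal)
            ((P D).toReal * (P E).toReal)
          linarith
      _ = _ := by rw [habs]; ring
  have habs3 : |(P E').toReal - (P E).toReal| ≤ (P (E ∆ E')).toReal := by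
    rw [abs_sub_comm]; exact h3
  have hmul : (P D).toReal * |(P E').toReal - (P E).toReal| ≤ (P (E ∆ E')).toReal := by
    calc (P D).toReal * |(P E').toReal - (P E).toReal|
        ≤ 1 * |(P E').toReal - (P E).toReal| := by
          apply mul_le_mul_of_nonneg_right hD1 (abs_nonneg _)
      _ = |(P E').toReal - (P E).toReal| := one_mul _
      _ ≤ (P (E ∆ E')).toReal := habs3
  linarith

end Aux

/-- If the tail σ-algebra is `P`-trivial for a translation invariant
probability measure `P`, then the action of translations is mixing:
`P(D ∩ (E + h)) → P(D)·P(E)` as `|h| → ∞`. -/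
theorem trivial_tail_implies_mixing (ℓ : ℕ) (P : Measure (Tess ℓ)) [IsProbabilityMeasure P]
    (hTI : ∀ E : Set (Tess ℓ), MeasurableSet E → ∀ h : V ℓ,
      P (tessTranslate ℓ h '' E) = P E)
    (htail : ∀ D : Set (Tess ℓ), MeasurableSet[tailSigma ℓ] D → P D = 0 ∨ P D = 1)
    (D E : Set (Tess ℓ)) (hD : MeasurableSet D) (hE : MeasurableSet E) :
    ∀ ε : ℝ, 0 < ε → ∃ R : ℝ, ∀ h : V ℓ, R ≤ ‖h‖ →
      |(P (D ∩ tessTranslate ℓ h '' E)).toReal - (P D).toReal * (P E).toReal| < ε :=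
  trivial_tail_implies_mixing' ℓ P hTI htail D E hD hE
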